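/- If P is a (K,F,Z,S) PDA with F > Z, and row i of P contains m integer entries, then deleting row i and the m columns that have an integer entry in row i yields a (m, F−1, Z, S') PDA for some S' ≤ S − m. Consequently S(K,F,Z) ≥ ⌈(F−Z)K/F⌉ + S(⌈(F−Z)K/F⌉, F−1, Z), where S(K,F,Z) denotes the minimum S over all (K,F,Z,S) PDAs. -/

import Mathlib

/-- A `(K, F, Z, S)` placement delivery array: an `F × K` array over `[0,S) ∪ {*}`
(star encoded as `none`) such that each column contains exactly `Z` stars, every
integer in `[0,S)` appears, and any two equal integer entries lie in distinct rows
and distinct columns with stars at the two crossing positions. -/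
def IsPDA (K F Z S : ℕ) (P : Fin F → Fin K → Option ℕ) : Prop :=
  (∀ j, (Finset.univ.filter fun i => P i j = none).card = Z) ∧
  (∀ i j s, P i j = some s → s < S) ∧
  (∀ s, s < S → ∃ i j, P i j = some s) ∧
  (∀ i₁ j₁ i₂ j₂ s, P i₁ j₁ = some s → P i₂ j₂ = some s → (i₁ ≠ i₂ ∨ j₁ ≠ j₂) →
    i₁ ≠ i₂ ∧ j₁ ≠ j₂ ∧ P i₁ j₂ = none ∧ P i₂ j₁ = none)

/-- `minS K F Z` is the minimum `S` for which a `(K, F, Z, S)` PDA exists. -/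
noncomputable def minS (K F Z : ℕ) : ℕ :=
  sInf {S | ∃ P : Fin F → Fin K → Option ℕ, IsPDA K F Z S P}


lemma relabel {F K Z Sb : ℕ} (P : Fin F → Fin K → Option ℕ)
    (h1 : ∀ j, (Finset.univ.filter fun i => P i j = none).card = Z)
    (h2 : ∀ i j s, P i j = some s → s < Sb)
    (h4 : ∀ i₁ j₁ i₂ j₂ s, P i₁ j₁ = some s → P i₂ j₂ = some s → (i₁ ≠ i₂ ∨ j₁ ≠ j₂) →
      i₁ ≠ i₂ ∧ j₁ ≠ j₂ ∧ P i₁ j₂ = none ∧ P i₂ j₁ = none) :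
    ∃ T : Finset ℕ, T = (Finset.range Sb).filter (fun s => ∃ i j, P i j = some s) ∧
      ∃ Q : Fin F → Fin K → Option ℕ, IsPDA K F Z T.card Q := by
  set T : Finset ℕ := (Finset.range Sb).filter (fun s => ∃ i j, P i j = some s) with hT
  have hmem : ∀ i j s, P i j = some s → s ∈ T := by
    intro i j s hs
    simp only [hT, Finset.mem_filter, Finset.mem_range]
    exact ⟨h2 i j s hs, i, j, hs⟩
  set e := T.orderIsoOfFin rfl with he
  set f : ℕ → ℕ := fun s => if h : s ∈ T then (e.symm ⟨s, h⟩ : ℕ) else 0 with hf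
  have hfinj : ∀ s₁ ∈ T, ∀ s₂ ∈ T, f s₁ = f s₂ → s₁ = s₂ := by
    intro s₁ hs₁ s₂ hs₂ h
    simp only [hf, dif_pos hs₁, dif_pos hs₂] at h
    have := e.symm.injective (Fin.val_injective h)
    exact Subtype.ext_iff.1 this
  refine ⟨T, rfl, fun i j => (P i j).map f, ?_, ?_, ?_, ?_⟩
  · intro j
    have : ∀ i : Fin F, ((P i j).map f = none) ↔ P i j = none := fun i => Option.map_eq_none_iff
    simp only [this]
    exact h1 j
  · rintro i j s hs
    rw [Option.map_eq_some_iff] at hs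
    obtain ⟨t, ht, rfl⟩ := hs
    have htT := hmem i j t ht
    simp only [hf, dif_pos htT]
    exact Fin.is_lt _
  · intro s hs
    set t : T := e ⟨s, hs⟩ with ht
    have htmem : (t:ℕ) ∈ (Finset.range Sb).filter (fun s => ∃ i j, P i j = some s) := by
      rw [← hT]; exact t.2
    obtain ⟨_, i, j, hij⟩ := Finset.mem_filter.1 htmem
    refine ⟨i, j, ?_⟩
    show Option.map f (P i j) = some s
    rw [hij, Option.map_some]
    congr 1
    simp only [hf, dif_pos (hmem i j _ hij)]
    have : (⟨(t : ℕ), t.2⟩ : {x // x ∈ T}) = t := rfl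
    rw [this, ht, e.symm_apply_apply]
  · rintro i₁ j₁ i₂ j₂ s hs₁ hs₂ hne
    rw [Option.map_eq_some_iff] at hs₁ hs₂
    obtain ⟨t₁, ht₁, hft₁⟩ := hs₁
    obtain ⟨t₂, ht₂, hft₂⟩ := hs₂
    have : t₁ = t₂ := hfinj t₁ (hmem _ _ _ ht₁) t₂ (hmem _ _ _ ht₂) (hft₁.trans hft₂.symm)
    subst this
    obtain ⟨a, b, c, d⟩ := h4 i₁ j₁ i₂ j₂ t₁ ht₁ ht₂ hne
    exact ⟨a, b, by simp [c], by simp [d]⟩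

lemma delete_row {K F Z S : ℕ} (hZF : Z < F) (P : Fin F → Fin K → Option ℕ)
    (hP : IsPDA K F Z S P) (i : Fin F) (m : ℕ)
    (hm : m = (Finset.univ.filter fun j => P i j ≠ none).card) :
    m ≤ S ∧ ∃ S' ≤ S - m, ∃ Q : Fin (F - 1) → Fin m → Option ℕ, IsPDA m (F - 1) Z S' Q := by
  obtain ⟨h1, h2, h3, h4⟩ := hP
  set cols : Finset (Fin K) := Finset.univ.filter (fun j => P i j ≠ none) with hcols
  have hF : F - 1 + 1 = F := by omega
  have hmc : m = cols.card := hm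
  set ce := cols.orderIsoOfFin hmc.symm with hce
  have hcemem : ∀ c : Fin m, P i (ce c) ≠ none := fun c => (Finset.mem_filter.1 (ce c).2).2
  set re : Fin (F - 1) → Fin F := fun r => Fin.cast hF ((Fin.cast hF.symm i).succAbove r) with hre
  have hreinj : Function.Injective re := fun a b h => by
    apply Fin.succAbove_right_injective (p := Fin.cast hF.symm i)
    exact Fin.cast_injective hF h
  have hrene : ∀ r, re r ≠ i := by
    intro r h
    apply Fin.succAbove_ne (Fin.cast hF.symm i) r
    apply Fin.cast_injective hF
    rw [Fin.ext_iff] at h ⊢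
    simpa [hre] using h
  have hresurj : ∀ r : Fin F, r ≠ i → ∃ r', re r' = r := by
    intro r hr
    obtain ⟨t, ht⟩ := Fin.exists_succAbove_eq (x := Fin.cast hF.symm r) (y := Fin.cast hF.symm i)
      (fun h => hr (Fin.cast_injective hF.symm h))
    refine ⟨t, ?_⟩
    rw [hre]
    simp only [ht]
    rw [Fin.ext_iff]; simp
  set P' : Fin (F - 1) → Fin m → Option ℕ := fun r c => P (re r) (ce c) with hP'
  have h1' : ∀ c, (Finset.univ.filter fun r => P' r c = none).card = Z := by
    intro c
    rw [← h1 (ce c)]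
    apply Finset.card_bij (fun r _ => re r)
    · intro r hr
      simp only [Finset.mem_filter, Finset.mem_univ, true_and] at hr ⊢
      exact hr
    · intro a _ b _ h; exact hreinj h
    · intro r hr
      simp only [Finset.mem_filter, Finset.mem_univ, true_and] at hr
      have hrne : r ≠ i := fun h => hcemem c (h ▸ hr)
      obtain ⟨r', hr'⟩ := hresurj r hrne
      refine ⟨r', ?_, hr'⟩
      simp only [Finset.mem_filter, Finset.mem_univ, true_and, hP', hr']
      exact hr
  have h2' : ∀ r c s, P' r c = some s → s < S := fun r c s h => h2 _ _ _ h
  have h4' : ∀ i₁ j₁ i₂ j₂ s, P' i₁ j₁ = some s → P' i₂ j₂ = some s → (i₁ ≠ i₂ ∨ j₁ ≠ j₂) →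
      i₁ ≠ i₂ ∧ j₁ ≠ j₂ ∧ P' i₁ j₂ = none ∧ P' i₂ j₁ = none := by
    intro a b c d s hs₁ hs₂ hne
    have hne' : re a ≠ re c ∨ (ce b : Fin K) ≠ (ce d : Fin K) := by
      rcases hne with h | h
      · exact Or.inl (fun hh => h (hreinj hh))
      · exact Or.inr (fun hh => h (ce.injective (Subtype.ext hh)))
    obtain ⟨x, y, u, v⟩ := h4 _ _ _ _ s hs₁ hs₂ hne'
    exact ⟨fun hh => x (by rw [hh]), fun hh => y (by rw [hh]), u, v⟩
  set R : Finset ℕ := cols.image (fun j => (P i j).getD 0) with hR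
  have hRval : ∀ j ∈ cols, P i j = some ((P i j).getD 0) := by
    intro j hj
    have := (Finset.mem_filter.1 hj).2
    obtain ⟨s, hs⟩ := Option.ne_none_iff_exists'.1 this
    rw [hs]; rfl
  have hRcard : R.card = m := by
    rw [hR, hmc, Finset.card_image_of_injOn]
    intro a ha b hb h
    have ha := Finset.mem_coe.1 ha
    have hb := Finset.mem_coe.1 hb
    have h' : (P i a).getD 0 = (P i b).getD 0 := h
    by_contra hab
    have := h4 i a i b _ (hRval a ha) (by rw [h']; exact hRval b hb) (Or.inr hab)
    exact this.1 rfl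
  have hRsub : R ⊆ Finset.range S := by
    intro s hs
    rw [hR, Finset.mem_image] at hs
    obtain ⟨j, hj, hjv⟩ := hs
    have hjv' : (P i j).getD 0 = s := hjv
    exact Finset.mem_range.2 (h2 _ _ _ (hjv' ▸ hRval j hj))
  have hmS : m ≤ S := by
    calc m = R.card := hRcard.symm
    _ ≤ (Finset.range S).card := Finset.card_le_card hRsub
    _ = S := Finset.card_range S
  refine ⟨hmS, ?_⟩
  obtain ⟨T, hTdef, Q, hQ⟩ := relabel P' h1' h2' h4'
  refine ⟨T.card, ?_, Q, hQ⟩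
  have hdisj : Disjoint T R := by
    rw [Finset.disjoint_left]
    intro s hsT hsR
    rw [hTdef, Finset.mem_filter] at hsT
    obtain ⟨_, a, b, hab⟩ := hsT
    rw [hR, Finset.mem_image] at hsR
    obtain ⟨j, hj, hjv⟩ := hsR
    have hjv' : (P i j).getD 0 = s := hjv
    have hPij : P i j = some s := hjv' ▸ hRval j hj
    have hres := h4 (re a) (ce b) i j s hab hPij (Or.inl (hrene a))
    exact hcemem b hres.2.2.2
  have hTsub : T ⊆ Finset.range S := by rw [hTdef]; exact Finset.filter_subset _ _
  have : T.card + m ≤ S := by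
    rw [← hRcard, ← Finset.card_union_of_disjoint hdisj]
    calc (T ∪ R).card ≤ (Finset.range S).card :=
      Finset.card_le_card (Finset.union_subset hTsub hRsub)
    _ = S := Finset.card_range S
  omega

lemma exists_pda (K F Z : ℕ) (hZF : Z ≤ F) :
    ∃ P : Fin F → Fin K → Option ℕ, IsPDA K F Z ((F - Z) * K) P := by
  refine ⟨fun i j => if (i : ℕ) < Z then none else some ((i - Z) + (F - Z) * j),
    ?_, ?_, ?_, ?_⟩
  · intro j
    have : (Finset.univ.filter fun i : Fin F =>
        (if (i : ℕ) < Z then (none : Option ℕ) else some ((i - Z) + (F - Z) * j)) = none)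
        = Finset.univ.filter (fun i : Fin F => (i : ℕ) < Z) := by
      ext i
      simp only [Finset.mem_filter, Finset.mem_univ, true_and]
      by_cases h : (i : ℕ) < Z <;> simp [h]
    rw [this]
    have : (Finset.univ.filter fun i : Fin F => (i : ℕ) < Z)
        = (Finset.range Z).attachFin (fun x hx => lt_of_lt_of_le (Finset.mem_range.1 hx) hZF) := by
      ext i
      simp [Finset.mem_attachFin]
    rw [this, Finset.card_attachFin, Finset.card_range]
  · intro i j s hs
    by_cases h : (i : ℕ) < Z
    · simp [h] at hs
    · simp only [if_neg h] at hs
      have hi := i.2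
      have hj := j.2
      have h1 : (i : ℕ) - Z < F - Z := by omega
      have : (i : ℕ) - Z + (F - Z) * j < (F - Z) * (j + 1) := by
        rw [Nat.mul_succ]; omega
      have h2 : (F - Z) * ((j : ℕ) + 1) ≤ (F - Z) * K := Nat.mul_le_mul_left _ (by omega)
      have hsv := Option.some.inj hs
      omega
  · intro s hs
    have hFZ : 0 < F - Z := by
      rcases Nat.eq_zero_or_pos (F - Z) with h | h
      · rw [h] at hs; omega
      · exact h
    have ha : s % (F - Z) < F - Z := Nat.mod_lt _ hFZ
    have hb : s / (F - Z) < K := Nat.div_lt_iff_lt_mul hFZ |>.2 (by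
      calc s < (F - Z) * K := hs
      _ = K * (F - Z) := Nat.mul_comm _ _)
    refine ⟨⟨Z + s % (F - Z), by omega⟩, ⟨s / (F - Z), hb⟩, ?_⟩
    have h1 : ¬ (Z + s % (F - Z) < Z) := by omega
    simp only [if_neg h1]
    congr 1
    have : Z + s % (F - Z) - Z = s % (F - Z) := by omega
    rw [this]
    exact Nat.mod_add_div s (F - Z)
  · intro i₁ j₁ i₂ j₂ s hs₁ hs₂ hne
    by_cases h₁ : (i₁ : ℕ) < Z
    · simp [h₁] at hs₁
    by_cases h₂ : (i₂ : ℕ) < Z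
    · simp [h₂] at hs₂
    simp only [if_neg h₁, Option.some.injEq] at hs₁
    simp only [if_neg h₂, Option.some.injEq] at hs₂
    have heq : (i₁ : ℕ) - Z + (F - Z) * j₁ = (i₂ : ℕ) - Z + (F - Z) * j₂ := by omega
    have hi₁ := i₁.2
    have hi₂ := i₂.2
    have ha₁ : (i₁ : ℕ) - Z < F - Z := by omega
    have ha₂ : (i₂ : ℕ) - Z < F - Z := by omega
    have hmod : ((i₁ : ℕ) - Z + (F - Z) * j₁) % (F - Z) = ((i₂ : ℕ) - Z + (F - Z) * j₂) % (F - Z) := by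
      rw [heq]
    rw [Nat.add_mul_mod_self_left, Nat.add_mul_mod_self_left,
      Nat.mod_eq_of_lt ha₁, Nat.mod_eq_of_lt ha₂] at hmod
    have hj : (F - Z) * (j₁ : ℕ) = (F - Z) * j₂ := by omega
    have hj' : (j₁ : ℕ) = j₂ := Nat.eq_of_mul_eq_mul_left (by omega) hj
    have hii : i₁ = i₂ := Fin.ext (by omega)
    have hjj : j₁ = j₂ := Fin.ext hj'
    rcases hne with h | h
    · exact absurd hii h
    · exact absurd hjj h

lemma minS_le_of_pda {K' K F Z S : ℕ} (h : K' ≤ K) {P : Fin F → Fin K → Option ℕ}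
    (hP : IsPDA K F Z S P) : minS K' F Z ≤ S := by
  obtain ⟨h1, h2, h3, h4⟩ := hP
  set P' : Fin F → Fin K' → Option ℕ := fun i j => P i (Fin.castLE h j) with hP'
  have h1' : ∀ j, (Finset.univ.filter fun i => P' i j = none).card = Z := fun j =>
    h1 (Fin.castLE h j)
  have h2' : ∀ i j s, P' i j = some s → s < S := fun i j s hh => h2 _ _ _ hh
  have h4' : ∀ i₁ j₁ i₂ j₂ s, P' i₁ j₁ = some s → P' i₂ j₂ = some s → (i₁ ≠ i₂ ∨ j₁ ≠ j₂) →
      i₁ ≠ i₂ ∧ j₁ ≠ j₂ ∧ P' i₁ j₂ = none ∧ P' i₂ j₁ = none := by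
    intro a b c d s hs₁ hs₂ hne
    have hne' : a ≠ c ∨ Fin.castLE h b ≠ Fin.castLE h d := by
      rcases hne with hh | hh
      · exact Or.inl hh
      · exact Or.inr fun x => hh (Fin.castLE_injective h x)
    obtain ⟨x, y, u, v⟩ := h4 _ _ _ _ s hs₁ hs₂ hne'
    exact ⟨x, fun hh => y (by rw [hh]), u, v⟩
  obtain ⟨T, hTdef, Q, hQ⟩ := relabel P' h1' h2' h4'
  have hle : minS K' F Z ≤ T.card := Nat.sInf_le ⟨Q, hQ⟩
  have hTsub : T ⊆ Finset.range S := by rw [hTdef]; exact Finset.filter_subset _ _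
  calc minS K' F Z ≤ T.card := hle
  _ ≤ (Finset.range S).card := Finset.card_le_card hTsub
  _ = S := Finset.card_range S

/-- deleting a row with `m` integer entries together with the `m`
columns having an integer in that row yields an `(m, F−1, Z, S')` PDA with
`S' ≤ S − m`; consequently
`minS K F Z ≥ ⌈(F−Z)K/F⌉ + minS ⌈(F−Z)K/F⌉ (F−1) Z`. -/
theorem stmt2 :
    (∀ (K F Z S : ℕ), Z < F → ∀ P : Fin F → Fin K → Option ℕ, IsPDA K F Z S P →
      ∀ i : Fin F, ∀ m : ℕ, m = (Finset.univ.filter fun j => P i j ≠ none).card →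
        ∃ S' ≤ S - m, ∃ Q : Fin (F - 1) → Fin m → Option ℕ, IsPDA m (F - 1) Z S' Q) ∧
    (∀ (K F Z : ℕ), 0 < K → Z < F →
      (F - Z) * K ⌈/⌉ F + minS ((F - Z) * K ⌈/⌉ F) (F - 1) Z ≤ minS K F Z) := by
  constructor
  · intro K F Z S hZF P hP i m hm
    exact (delete_row hZF P hP i m hm).2
  · intro K F Z hK hZF
    set c := (F - Z) * K ⌈/⌉ F with hc
    have hFpos : 0 < F := by omega
    have hSne : {S | ∃ P : Fin F → Fin K → Option ℕ, IsPDA K F Z S P}.Nonempty :=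
      ⟨(F - Z) * K, exists_pda K F Z hZF.le⟩
    have hmem : ∃ P : Fin F → Fin K → Option ℕ, IsPDA K F Z (minS K F Z) P :=
      Nat.sInf_mem hSne
    obtain ⟨P, hP⟩ := hmem
    have percol : ∀ j : Fin K, (Finset.univ.filter fun i => P i j ≠ none).card = F - Z := by
      intro j
      have h1 := hP.1 j
      have h : (Finset.univ.filter fun i => P i j ≠ none)
          = Finset.univ \ (Finset.univ.filter fun i => P i j = none) := by
        ext x
        simp [ne_eq]
      rw [h, Finset.card_sdiff_of_subset (Finset.filter_subset _ _), h1]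
      simp
    have hrowsum : ∑ i : Fin F, (Finset.univ.filter fun j => P i j ≠ none).card
        = (F - Z) * K := by
      simp_rw [Finset.card_filter]
      rw [Finset.sum_comm]
      simp_rw [← Finset.card_filter, percol, Finset.sum_const, Finset.card_univ,
        Fintype.card_fin, smul_eq_mul]
      exact Nat.mul_comm _ _
    have hex : ∃ i : Fin F, c ≤ (Finset.univ.filter fun j => P i j ≠ none).card := by
      by_contra hno
      push_neg at hno
      have hsum_le : (F - Z) * K ≤ F * (c - 1) := by
        rw [← hrowsum]
        calc ∑ i : Fin F, (Finset.univ.filter fun j => P i j ≠ none).card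
            ≤ ∑ _i : Fin F, (c - 1) := Finset.sum_le_sum (fun i _ => by have := hno i; omega)
        _ = F * (c - 1) := by
            simp [Finset.sum_const, Finset.card_univ, Fintype.card_fin, smul_eq_mul]
      have hcle : c ≤ c - 1 := by rw [hc]; exact (ceilDiv_le_iff_le_mul hFpos).2 hsum_le
      have hcpos : 0 < c := by
        by_contra h0
        have h1 : (F - Z) * K ≤ F * 0 := by
          have : c ≤ 0 := by omega
          rw [hc] at this
          exact (ceilDiv_le_iff_le_mul hFpos).1 this
        have h2 : 0 < (F - Z) * K := Nat.mul_pos (by omega) hK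
        omega
      omega
    obtain ⟨i, hi⟩ := hex
    obtain ⟨hmS, S', hS'le, Q, hQ⟩ := delete_row hZF P hP i _ rfl
    have h1 : minS c (F - 1) Z ≤ S' := minS_le_of_pda hi hQ
    omega
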